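/- arXiv:1108.5533 — 4 statements merged into one kernel-verified Lean document; each statement's English description precedes it below -/
import Mathlib

section
/- Let γ ∈ ℝ^p, let Γ be a subspace of ℝ^p with distortion δ (i.e. ∀x ∈ Γ, √p‖x‖₂ ≤ δ‖x‖₁), and let π_Γ be the orthogonal projection onto Γ. Then for any subset S ⊆ {1,…,p} with |S| = s, ‖γ_S‖₁ ≤ (√s/√p)δ‖γ‖₁ + (1+δ)√s ‖π_{Γ^⊥}(γ)‖₂. -/
open Finset

lemma l1_le_sqrt_card (p : ℕ) (x : EuclideanSpace ℝ (Fin p)) (T : Finset (Fin p)) :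
    (∑ i ∈ T, |x i|) ≤ Real.sqrt T.card * ‖x‖ := by
  have h1 : (∑ i ∈ T, |x i|) ^ 2 ≤ T.card * ∑ i ∈ T, |x i| ^ 2 :=
    sq_sum_le_card_mul_sum_sq
  have h2 : (∑ i ∈ T, |x i| ^ 2) ≤ ∑ i, x i ^ 2 := by
    refine Finset.sum_le_sum_of_subset_of_nonneg (Finset.subset_univ T) (fun i _ _ => by positivity) |>.trans_eq ?_
    simp [sq_abs]
  have hnorm : ‖x‖ = Real.sqrt (∑ i, x i ^ 2) := by
    simp [EuclideanSpace.norm_eq, sq_abs]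
  have hle : (∑ i ∈ T, |x i|) ^ 2 ≤ (T.card : ℝ) * ∑ i, x i ^ 2 := by
    refine h1.trans ?_
    exact mul_le_mul_of_nonneg_left h2 (by positivity)
  have := Real.sqrt_le_sqrt hle
  rw [Real.sqrt_sq (by positivity), Real.sqrt_mul (by positivity)] at this
  rw [hnorm]
  exact this

/-- Interpolation step: for a subspace `Γ ⊆ ℝ^p` of distortion `δ` and any `γ`,
`‖γ_S‖₁ ≤ (√s/√p) δ ‖γ‖₁ + (1+δ) √s ‖π_{Γ^⊥} γ‖₂` whenever `|S| = s`. -/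
theorem stmt_2 (p : ℕ) (δ : ℝ) (hδ : 1 ≤ δ)
    (Γ : Submodule ℝ (EuclideanSpace ℝ (Fin p)))
    (hdist : ∀ x ∈ Γ, (∑ i, |x i|) ≤ Real.sqrt p * ‖x‖ ∧
      Real.sqrt p * ‖x‖ ≤ δ * ∑ i, |x i|)
    (γ : EuclideanSpace ℝ (Fin p)) (S : Finset (Fin p)) (s : ℕ) (hS : S.card = s) :
    (∑ i ∈ S, |γ i|) ≤ (Real.sqrt s / Real.sqrt p) * δ * (∑ i, |γ i|)
      + (1 + δ) * Real.sqrt s *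
        ‖(Γᗮ.orthogonalProjectionOnto γ : EuclideanSpace ℝ (Fin p))‖ := by
  rcases Nat.eq_zero_or_pos p with hp | hp
  · subst hp
    have : S = ∅ := Finset.eq_empty_of_isEmpty S
    subst this
    simp at hS
    simp [← hS]
  have hsp : (0:ℝ) < Real.sqrt p := Real.sqrt_pos.mpr (by positivity)
  set v := (Γ.orthogonalProjectionOnto γ : EuclideanSpace ℝ (Fin p)) with hv
  set w := (Γᗮ.orthogonalProjectionOnto γ : EuclideanSpace ℝ (Fin p)) with hw
  have hvw : v + w = γ := Γ.starProjection_add_starProjection_orthogonal γ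
  have hvmem : v ∈ Γ := (Γ.orthogonalProjectionOnto γ).2
  -- pointwise split
  have hsplit : (∑ i ∈ S, |γ i|) ≤ (∑ i ∈ S, |v i|) + ∑ i ∈ S, |w i| := by
    rw [← Finset.sum_add_distrib]
    refine Finset.sum_le_sum fun i _ => ?_
    have : γ i = v i + w i := by rw [← hvw]; rfl
    rw [this]
    exact abs_add_le _ _
  -- Cauchy-Schwarz bounds
  have hcsv : (∑ i ∈ S, |v i|) ≤ Real.sqrt s * ‖v‖ := by
    simpa [hS] using l1_le_sqrt_card p v S
  have hcsw : (∑ i ∈ S, |w i|) ≤ Real.sqrt s * ‖w‖ := by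
    simpa [hS] using l1_le_sqrt_card p w S
  -- distortion bound on v
  have hdv : Real.sqrt p * ‖v‖ ≤ δ * ∑ i, |v i| := (hdist v hvmem).2
  -- ∑ |v i| ≤ ∑ |γ i| + ∑ |w i|
  have hl1v : (∑ i, |v i|) ≤ (∑ i, |γ i|) + ∑ i, |w i| := by
    rw [← Finset.sum_add_distrib]
    refine Finset.sum_le_sum fun i _ => ?_
    have : v i = γ i - w i := by rw [← hvw]; simp [PiLp.add_apply]
    rw [this]
    exact abs_sub _ _
  have hl1w : (∑ i, |w i|) ≤ Real.sqrt p * ‖w‖ := by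
    simpa using l1_le_sqrt_card p w Finset.univ
  -- combine
  have hnv : ‖v‖ ≤ δ / Real.sqrt p * (∑ i, |γ i|) + δ * ‖w‖ := by
    rw [div_mul_eq_mul_div, ← sub_nonneg]
    have key : Real.sqrt p * ‖v‖ ≤ δ * (∑ i, |γ i|) + δ * (Real.sqrt p * ‖w‖) := by
      calc Real.sqrt p * ‖v‖ ≤ δ * ∑ i, |v i| := hdv
        _ ≤ δ * ((∑ i, |γ i|) + Real.sqrt p * ‖w‖) := by
            refine mul_le_mul_of_nonneg_left ?_ (by linarith)
            exact hl1v.trans (by linarith)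
        _ = δ * (∑ i, |γ i|) + δ * (Real.sqrt p * ‖w‖) := by ring
    have : ‖v‖ ≤ (δ * (∑ i, |γ i|) + δ * (Real.sqrt p * ‖w‖)) / Real.sqrt p :=
      (le_div_iff₀ hsp).mpr (by linarith [key])
    rw [sub_nonneg]
    calc ‖v‖ ≤ (δ * (∑ i, |γ i|) + δ * (Real.sqrt p * ‖w‖)) / Real.sqrt p := this
      _ = δ * (∑ i, |γ i|) / Real.sqrt p + δ * ‖w‖ := by field_simp
  have hss : (0:ℝ) ≤ Real.sqrt s := Real.sqrt_nonneg _
  calc (∑ i ∈ S, |γ i|) ≤ (∑ i ∈ S, |v i|) + ∑ i ∈ S, |w i| := hsplit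
    _ ≤ Real.sqrt s * ‖v‖ + Real.sqrt s * ‖w‖ := add_le_add hcsv hcsw
    _ ≤ Real.sqrt s * (δ / Real.sqrt p * (∑ i, |γ i|) + δ * ‖w‖) + Real.sqrt s * ‖w‖ := by
        exact add_le_add_left (mul_le_mul_of_nonneg_left hnv hss) _
    _ = (Real.sqrt s / Real.sqrt p) * δ * (∑ i, |γ i|) + (1 + δ) * Real.sqrt s * ‖w‖ := by
        ring
end

section
/- Let β^ℓ be a minimizer of β ↦ (1/2)‖Xβ − y‖₂² + λ_ℓ‖β‖₁ where y = Xβ* + ε, and suppose ‖X^⊤ε‖_∞ ≤ λ_n⁰ with λ_ℓ ≥ λ_n⁰. Set h = β^ℓ − β*. Then for all subsets S ⊆ {1,…,p}: (1/(2λ_ℓ))[(1/2)‖Xh‖₂² + (λ_ℓ − λ_n⁰)‖h‖₁] ≤ ‖h_S‖₁ + ‖β*_{S^c}‖₁. -/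
open Finset Matrix

/-- The ℓ¹ norm of a vector. -/
noncomputable def l1 {p : ℕ} (v : Fin p → ℝ) : ℝ := ∑ i, |v i|

/-- The ℓ² norm of a vector. -/
noncomputable def l2 {n : ℕ} (v : Fin n → ℝ) : ℝ := Real.sqrt (∑ i, (v i) ^ 2)

/-- Restriction of a vector to a set of coordinates (zero elsewhere). -/
def restr {p : ℕ} (v : Fin p → ℝ) (S : Finset (Fin p)) : Fin p → ℝ :=
  fun i => if i ∈ S then v i else 0

/-- Basic lasso inequality: if `β^ℓ` minimizes `(1/2)‖Xβ−y‖₂² + λ‖β‖₁`, `y = Xβ* + ε`,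
`‖Xᵀε‖_∞ ≤ λ⁰ ≤ λ`, and `h = β^ℓ − β*`, then for every subset `S`,
`(1/(2λ))[(1/2)‖Xh‖₂² + (λ−λ⁰)‖h‖₁] ≤ ‖h_S‖₁ + ‖β*_{Sᶜ}‖₁`. -/
theorem stmt_3 (n p : ℕ) (X : Matrix (Fin n) (Fin p) ℝ)
    (βstar βl : Fin p → ℝ) (ε y : Fin n → ℝ) (lam lam0 : ℝ)
    (hy : y = X.mulVec βstar + ε)
    (hnoise : ∀ j, |Xᵀ.mulVec ε j| ≤ lam0)
    (hlam : lam0 ≤ lam) (hlam0 : 0 ≤ lam0)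
    (hmin : ∀ β : Fin p → ℝ,
      (1/2) * (∑ i, (X.mulVec βl i - y i) ^ 2) + lam * l1 βl
        ≤ (1/2) * (∑ i, (X.mulVec β i - y i) ^ 2) + lam * l1 β) :
    ∀ S : Finset (Fin p),
      (1 / (2 * lam)) * ((1/2) * (∑ i, (X.mulVec (βl - βstar) i) ^ 2)
          + (lam - lam0) * l1 (βl - βstar))
        ≤ l1 (restr (βl - βstar) S) + l1 (restr βstar Sᶜ) := by

  intro S
  set h : Fin p → ℝ := βl - βstar with hh
  have l1nn : ∀ v : Fin p → ℝ, 0 ≤ l1 v :=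
    fun v => Finset.sum_nonneg (fun i _ => abs_nonneg _)
  have hXh : ∀ i, X.mulVec βl i - y i = X.mulVec h i - ε i := by
    intro i
    have hmv : X.mulVec h i = X.mulVec βl i - X.mulVec βstar i := by
      rw [hh, Matrix.mulVec_sub]; rfl
    rw [hmv, hy]; simp [Pi.add_apply]; ring
  have hinner : ∑ i, X.mulVec h i * ε i ≤ lam0 * l1 h := by
    have hswap : ∑ i, X.mulVec h i * ε i = ∑ j, h j * (Xᵀ.mulVec ε j) := by
      simp only [Matrix.mulVec, dotProduct, Matrix.transpose_apply,
        Finset.sum_mul, Finset.mul_sum]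
      rw [Finset.sum_comm]
      apply Finset.sum_congr rfl; intro j _
      apply Finset.sum_congr rfl; intro i _; ring
    rw [hswap, l1, Finset.mul_sum]
    apply Finset.sum_le_sum
    intro j _
    calc h j * (Xᵀ.mulVec ε j) ≤ |h j * (Xᵀ.mulVec ε j)| := le_abs_self _
      _ = |h j| * |Xᵀ.mulVec ε j| := abs_mul _ _
      _ ≤ |h j| * lam0 := mul_le_mul_of_nonneg_left (hnoise j) (abs_nonneg _)
      _ = lam0 * |h j| := mul_comm _ _
  have hm := hmin βstar
  have e1 : ∑ i, (X.mulVec βstar i - y i) ^ 2 = ∑ i, ε i ^ 2 := by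
    apply Finset.sum_congr rfl; intro i _; rw [hy]; simp [Pi.add_apply]
  have e2 : ∑ i, (X.mulVec βl i - y i) ^ 2
      = ∑ i, (X.mulVec h i) ^ 2 - 2 * (∑ i, X.mulVec h i * ε i) + ∑ i, ε i ^ 2 := by
    rw [Finset.mul_sum, ← Finset.sum_sub_distrib, ← Finset.sum_add_distrib]
    apply Finset.sum_congr rfl; intro i _; rw [hXh i]; ring
  have basic : (1/2) * (∑ i, (X.mulVec h i) ^ 2)
      ≤ lam0 * l1 h + lam * l1 βstar - lam * l1 βl := by
    rw [e1, e2] at hm; linarith [hinner]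
  have pt : ∀ i ∈ Finset.univ, |h i| + |βstar i| - |βl i|
      ≤ 2 * |restr h S i| + 2 * |restr βstar Sᶜ i| := by
    intro i _
    have hhi : h i = βl i - βstar i := rfl
    unfold restr
    by_cases hi : i ∈ S
    · have hic : i ∉ Sᶜ := by simp [hi]
      simp only [hi, hic, if_true, if_false, abs_zero]
      have h1 : |βstar i| - |βl i| ≤ |βstar i - βl i| := abs_sub_abs_le_abs_sub _ _
      have h2 : |βstar i - βl i| = |h i| := by rw [hhi, abs_sub_comm]
      linarith
    · have hic : i ∈ Sᶜ := Finset.mem_compl.mpr hi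
      simp only [hi, hic, if_true, if_false, abs_zero]
      have h1 : |h i| ≤ |βl i| + |βstar i| := by rw [hhi]; exact abs_sub _ _
      linarith
  have sumpt : l1 h + l1 βstar - l1 βl
      ≤ 2 * l1 (restr h S) + 2 * l1 (restr βstar Sᶜ) := by
    have hs := Finset.sum_le_sum pt
    simp only [Finset.sum_add_distrib, Finset.sum_sub_distrib, ← Finset.mul_sum] at hs
    simpa [l1] using hs
  have key : (1/2) * (∑ i, (X.mulVec h i) ^ 2) + (lam - lam0) * l1 h
      ≤ 2 * lam * (l1 (restr h S) + l1 (restr βstar Sᶜ)) := by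
    have h1 : lam * (l1 h + l1 βstar - l1 βl)
        ≤ lam * (2 * l1 (restr h S) + 2 * l1 (restr βstar Sᶜ)) :=
      mul_le_mul_of_nonneg_left sumpt (le_trans hlam0 hlam)
    nlinarith [basic, h1]
  rcases eq_or_lt_of_le (le_trans hlam0 hlam) with h0 | h0
  · rw [← h0]
    simp only [mul_zero, div_zero, zero_mul]
    have := l1nn (restr h S); have := l1nn (restr βstar Sᶜ); linarith
  · rw [one_div, inv_mul_le_iff₀ (by positivity : (0:ℝ) < 2 * lam)]
    calc (1/2) * (∑ i, (X.mulVec h i) ^ 2) + (lam - lam0) * l1 h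
        ≤ 2 * lam * (l1 (restr h S) + l1 (restr βstar Sᶜ)) := key
      _ = _ := by ring
end

section
/- Assume X satisfies UDP(S₀, κ₀, Δ) with 0 < κ₀ < 1/2, ‖X^⊤ε‖_∞ ≤ λ_n⁰, and λ_ℓ > λ_n⁰/(1−2κ₀). Let β^ℓ be a lasso minimizer for y = Xβ* + ε with parameter λ_ℓ. Then for every s ≤ S₀ and every subset S with |S| = s: ‖β^ℓ − β*‖₁ ≤ (2/((1 − λ_n⁰/λ_ℓ) − 2κ₀)) · (λ_ℓ Δ² s + ‖β*_{S^c}‖₁). -/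
open Finset Matrix

/-- The Universal Distortion Property UDP(S₀, κ₀, Δ). -/
def UDP {n p : ℕ} (X : Matrix (Fin n) (Fin p) ℝ) (S₀ κ₀ Δ : ℝ) : Prop :=
  ∀ γ : Fin p → ℝ, ∀ s : ℕ, 1 ≤ s → (s : ℝ) ≤ S₀ →
    ∀ S : Finset (Fin p), S.card = s →
      l1 (restr γ S) ≤ Δ * Real.sqrt s * l2 (X.mulVec γ) + κ₀ * l1 γ

lemma l1_restr_eq {p : ℕ} (v : Fin p → ℝ) (T : Finset (Fin p)) :
    l1 (restr v T) = ∑ i ∈ T, |v i| := by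
  unfold l1 restr
  rw [Finset.sum_congr rfl (fun i _ => by rw [apply_ite abs, abs_zero]),
    Finset.sum_ite_mem, Finset.univ_inter]

set_option maxHeartbeats 1600000

/-- Oracle inequality in ℓ¹ risk for the lasso under UDP (de Castro, Thm 2.1). -/
theorem stmt_4 (n p : ℕ) (X : Matrix (Fin n) (Fin p) ℝ)
    (S₀ κ₀ Δ : ℝ) (hκ₀ : 0 < κ₀ ∧ κ₀ < 1/2) (hudp : UDP X S₀ κ₀ Δ)
    (βstar βl : Fin p → ℝ) (ε y : Fin n → ℝ) (lam lam0 : ℝ)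
    (hy : y = X.mulVec βstar + ε)
    (hnoise : ∀ j, |Xᵀ.mulVec ε j| ≤ lam0) (hlam0 : 0 ≤ lam0)
    (hlam : lam > lam0 / (1 - 2 * κ₀))
    (hmin : ∀ β : Fin p → ℝ,
      (1/2) * (∑ i, (X.mulVec βl i - y i) ^ 2) + lam * l1 βl
        ≤ (1/2) * (∑ i, (X.mulVec β i - y i) ^ 2) + lam * l1 β) :
    ∀ s : ℕ, 1 ≤ s → (s : ℝ) ≤ S₀ → ∀ S : Finset (Fin p), S.card = s →
      l1 (βl - βstar)
        ≤ (2 / ((1 - lam0 / lam) - 2 * κ₀)) * (lam * Δ ^ 2 * s + l1 (restr βstar Sᶜ)) := by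
  obtain ⟨hκpos, hκlt⟩ := hκ₀
  intro s hs1 hsS S hcard
  have hκ' : (0:ℝ) < 1 - 2 * κ₀ := by linarith
  have hlampos : 0 < lam := lt_of_le_of_lt (div_nonneg hlam0 hκ'.le) hlam
  have hlam0lt : lam0 < lam * (1 - 2 * κ₀) := (div_lt_iff₀ hκ').mp hlam
  set h : Fin p → ℝ := βl - βstar with hh
  -- basic quantities
  set A : ℝ := ∑ i, (X.mulVec h i) ^ 2 with hA
  have hA0 : 0 ≤ A := Finset.sum_nonneg fun i _ => sq_nonneg _
  set sA : ℝ := Real.sqrt A with hsA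
  have hsA2 : sA ^ 2 = A := Real.sq_sqrt hA0
  set ss : ℝ := Real.sqrt s with hss
  have hss2 : ss ^ 2 = (s : ℝ) := Real.sq_sqrt (Nat.cast_nonneg s)
  -- residual rewriting
  have e1 : ∀ i, X.mulVec βl i - y i = X.mulVec h i - ε i := by
    intro i
    simp [hh, hy, Matrix.mulVec_sub, Pi.sub_apply]
    ring
  have e2 : ∀ i, X.mulVec βstar i - y i = - ε i := by
    intro i; simp [hy]
  -- optimality inequality, expanded
  have key0 := hmin βstar
  have expand1 : (∑ i, (X.mulVec βl i - y i) ^ 2)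
      = A - 2 * (∑ i, X.mulVec h i * ε i) + ∑ i, (ε i) ^ 2 := by
    rw [hA, Finset.mul_sum, ← Finset.sum_sub_distrib, ← Finset.sum_add_distrib]
    exact Finset.sum_congr rfl fun i _ => by rw [e1 i]; ring
  have expand2 : (∑ i, (X.mulVec βstar i - y i) ^ 2) = ∑ i, (ε i) ^ 2 :=
    Finset.sum_congr rfl fun i _ => by rw [e2 i]; ring
  rw [expand1, expand2] at key0
  -- key : (1/2) A + lam * l1 βl ≤ T' + lam * l1 βstar
  set T' : ℝ := ∑ i, X.mulVec h i * ε i with hT'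
  have key : (1/2) * A + lam * l1 βl ≤ T' + lam * l1 βstar := by linarith
  -- bound T'
  have hswap : T' = ∑ j, h j * Xᵀ.mulVec ε j := by
    rw [hT']
    simp only [Matrix.mulVec, dotProduct, Matrix.transpose_apply, Finset.sum_mul,
      Finset.mul_sum]
    rw [Finset.sum_comm]
    exact Finset.sum_congr rfl fun j _ => Finset.sum_congr rfl fun i _ => by ring
  have hTb : T' ≤ lam0 * l1 h := by
    rw [hswap, l1, Finset.mul_sum]
    refine Finset.sum_le_sum fun j _ => ?_
    calc h j * Xᵀ.mulVec ε j ≤ |h j * Xᵀ.mulVec ε j| := le_abs_self _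
      _ = |h j| * |Xᵀ.mulVec ε j| := abs_mul _ _
      _ ≤ |h j| * lam0 := mul_le_mul_of_nonneg_left (hnoise j) (abs_nonneg _)
      _ = lam0 * |h j| := mul_comm _ _
  -- ℓ¹ decompositions
  set HS : ℝ := ∑ i ∈ S, |h i| with hHS
  set HC : ℝ := ∑ i ∈ Sᶜ, |h i| with hHC
  set BS : ℝ := ∑ i ∈ S, |βstar i| with hBS
  set BC : ℝ := ∑ i ∈ Sᶜ, |βstar i| with hBC
  have hl1h : l1 h = HS + HC := (Finset.sum_add_sum_compl S _).symm
  have hl1b : l1 βstar = BS + BC := (Finset.sum_add_sum_compl S _).symm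
  -- triangle inequalities
  have tri1 : BS - HS ≤ ∑ i ∈ S, |βl i| := by
    rw [hBS, hHS, ← Finset.sum_sub_distrib]
    refine Finset.sum_le_sum fun i _ => ?_
    have : βstar i = βl i - h i := by simp [hh]
    rw [this]
    have := abs_sub (βl i) (h i)
    linarith [abs_sub (βl i) (h i)]
  have tri2 : HC - BC ≤ ∑ i ∈ Sᶜ, |βl i| := by
    rw [hBC, hHC, ← Finset.sum_sub_distrib]
    refine Finset.sum_le_sum fun i _ => ?_
    have hhi : h i = βl i - βstar i := by simp [hh]
    rw [hhi]
    linarith [abs_sub (βl i) (βstar i)]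
  have hl1bl : BS - HS + (HC - BC) ≤ l1 βl := by
    rw [l1, ← Finset.sum_add_sum_compl S fun i => |βl i|]
    linarith
  -- UDP
  have hudp' := hudp h s hs1 hsS S hcard
  rw [l1_restr_eq, hl1h] at hudp'
  have hl2 : l2 (X.mulVec h) = sA := rfl
  rw [hl2, ← hss] at hudp'
  clear_value h A sA ss T' HS HC BS BC
  -- AM-GM
  have amgm : 2 * lam * (Δ * ss * sA) ≤ (1/2) * A + 2 * lam ^ 2 * Δ ^ 2 * s := by
    have base : 2 * lam * (Δ * ss * sA) ≤ (1/2) * sA ^ 2 + 2 * lam ^ 2 * Δ ^ 2 * ss ^ 2 := by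
      nlinarith [sq_nonneg (sA - 2 * lam * Δ * ss)]
    rw [hsA2, hss2] at base
    exact base
  -- combine
  have hLbl2 : lam * (BS - HS + (HC - BC)) ≤ lam * l1 βl :=
    mul_le_mul_of_nonneg_left hl1bl hlampos.le
  rw [← hHS] at hudp'
  have udp2 : 2 * lam * HS ≤ 2 * lam * (Δ * ss * sA + κ₀ * (HS + HC)) :=
    mul_le_mul_of_nonneg_left hudp' (by positivity)
  have hTb2 : T' ≤ lam0 * (HS + HC) := by rw [hl1h] at hTb; exact hTb
  rw [hl1b] at key
  have hstep : lam * (HS + HC)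
      ≤ lam0 * (HS + HC) + 2 * lam ^ 2 * Δ ^ 2 * s + 2 * lam * κ₀ * (HS + HC)
        + 2 * lam * BC := by linarith [key, hTb2, hLbl2, udp2, amgm]
  have hc : 0 < (1 - lam0 / lam) - 2 * κ₀ := by
    have : lam0 / lam < 1 - 2 * κ₀ := (div_lt_iff₀ hlampos).mpr (by linarith)
    linarith
  have hfin : ((1 - lam0 / lam) - 2 * κ₀) * (HS + HC)
      ≤ 2 * (lam * Δ ^ 2 * s + BC) := by
    rw [← mul_le_mul_iff_right₀ hlampos]
    have elc : lam * ((1 - lam0 / lam) - 2 * κ₀) = lam - lam0 - 2 * lam * κ₀ := by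
      field_simp
    have e : lam * (((1 - lam0 / lam) - 2 * κ₀) * (HS + HC))
        = (lam - lam0 - 2 * lam * κ₀) * (HS + HC) := by
      rw [← mul_assoc, elc]
    rw [e]
    linarith [hstep]
  rw [hl1h, l1_restr_eq, ← hBC, div_mul_eq_mul_div, le_div_iff₀ hc]
  linarith
end

section
/- Let β^d minimize ‖β‖₁ subject to ‖X^⊤(y − Xβ)‖_∞ ≤ λ_d, where y = Xβ* + ε, ‖X^⊤ε‖_∞ ≤ λ_n⁰, and λ_d ≥ λ_n⁰. Set h = β* − β^d. Then for all subsets S ⊆ {1,…,p}: (1/(4λ_d))[‖Xh‖₂² + (λ_d − λ_n⁰)‖h‖₁] ≤ ‖h_S‖₁ + ‖β*_{S^c}‖₁. -/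
open Finset Matrix

lemma l1_nonneg {p : ℕ} (v : Fin p → ℝ) : 0 ≤ l1 v :=
  Finset.sum_nonneg fun i _ => abs_nonneg _

lemma l1_split {p : ℕ} (v : Fin p → ℝ) (S : Finset (Fin p)) :
    l1 v = l1 (restr v S) + l1 (restr v Sᶜ) := by
  unfold l1 restr
  rw [← Finset.sum_add_distrib]
  apply Finset.sum_congr rfl
  intro i _
  by_cases hi : i ∈ S <;> simp [hi]

lemma l1_restr_sub_le {p : ℕ} (u v : Fin p → ℝ) (T : Finset (Fin p)) :
    l1 (restr (u - v) T) ≤ l1 (restr u T) + l1 (restr v T) := by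
  unfold l1 restr
  rw [← Finset.sum_add_distrib]
  apply Finset.sum_le_sum
  intro i _
  by_cases hi : i ∈ T <;> simp [hi]
  simpa [sub_eq_add_neg] using abs_add_le (u i) (-(v i))

lemma l1_restr_add_le {p : ℕ} (u v : Fin p → ℝ) (T : Finset (Fin p)) :
    l1 (restr (u + v) T) ≤ l1 (restr u T) + l1 (restr v T) := by
  unfold l1 restr
  rw [← Finset.sum_add_distrib]
  apply Finset.sum_le_sum
  intro i _
  by_cases hi : i ∈ T <;> simp [hi]
  exact abs_add_le (u i) (v i)

/-- Basic Dantzig-selector inequality: with `h = β* − β^d`, for all `S`,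
`(1/(4λ_d))[‖Xh‖₂² + (λ_d − λ⁰)‖h‖₁] ≤ ‖h_S‖₁ + ‖β*_{Sᶜ}‖₁`. -/
theorem stmt_6 (n p : ℕ) (X : Matrix (Fin n) (Fin p) ℝ)
    (βstar βd : Fin p → ℝ) (ε y : Fin n → ℝ) (lamd lam0 : ℝ)
    (hy : y = X.mulVec βstar + ε)
    (hnoise : ∀ j, |Xᵀ.mulVec ε j| ≤ lam0) (hlam0 : 0 ≤ lam0)
    (hlam : lam0 ≤ lamd)
    (hfeas : ∀ j, |Xᵀ.mulVec (y - X.mulVec βd) j| ≤ lamd)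
    (hmin : ∀ β : Fin p → ℝ, (∀ j, |Xᵀ.mulVec (y - X.mulVec β) j| ≤ lamd) →
      l1 βd ≤ l1 β) :
    ∀ S : Finset (Fin p),
      (1 / (4 * lamd)) * ((∑ i, (X.mulVec (βstar - βd) i) ^ 2)
          + (lamd - lam0) * l1 (βstar - βd))
        ≤ l1 (restr (βstar - βd) S) + l1 (restr βstar Sᶜ) := by
  intro S
  set h : Fin p → ℝ := βstar - βd with hh
  -- β* is feasible
  have hfstar : ∀ j, |Xᵀ.mulVec (y - X.mulVec βstar) j| ≤ lamd := by
    intro j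
    have e : y - X.mulVec βstar = ε := by rw [hy]; abel
    rw [e]; exact (hnoise j).trans hlam
  have hmin' : l1 βd ≤ l1 βstar := hmin βstar hfstar
  -- coordinate bound on Xᵀ X h
  have hXtX : ∀ j, |Xᵀ.mulVec (X.mulVec h) j| ≤ lamd + lam0 := by
    intro j
    have e : X.mulVec h = (y - X.mulVec βd) - ε := by
      rw [hh, hy, Matrix.mulVec_sub]; abel
    rw [e, Matrix.mulVec_sub]
    calc |(Xᵀ.mulVec (y - X.mulVec βd) - Xᵀ.mulVec ε) j|
        ≤ |Xᵀ.mulVec (y - X.mulVec βd) j| + |Xᵀ.mulVec ε j| := by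
          simpa [sub_eq_add_neg] using
            abs_add_le (Xᵀ.mulVec (y - X.mulVec βd) j) (-(Xᵀ.mulVec ε j))
      _ ≤ lamd + lam0 := add_le_add (hfeas j) (hnoise j)
  -- quadratic form identity
  have eq1 : ∑ i, (X.mulVec h i) ^ 2 = ∑ j, h j * Xᵀ.mulVec (X.mulVec h) j := by
    simp only [Matrix.mulVec, dotProduct, Matrix.transpose_apply, Finset.mul_sum]
    rw [Finset.sum_comm]
    apply Finset.sum_congr rfl
    intro i _
    rw [pow_two]
    rw [show (∑ j, X i j * h j) * (∑ j, X i j * h j)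
        = ∑ j, (X i j * h j) * (∑ k, X i k * h k) from Finset.sum_mul ..]
    apply Finset.sum_congr rfl
    intro j _
    rw [Finset.mul_sum]
    exact Finset.sum_congr rfl fun k _ => by ring
  have hquad : ∑ i, (X.mulVec h i) ^ 2 ≤ (lamd + lam0) * l1 h := by
    rw [eq1]
    calc ∑ j, h j * Xᵀ.mulVec (X.mulVec h) j
        ≤ ∑ j, |h j| * (lamd + lam0) := by
          apply Finset.sum_le_sum
          intro j _
          calc h j * Xᵀ.mulVec (X.mulVec h) j
              ≤ |h j * Xᵀ.mulVec (X.mulVec h) j| := le_abs_self _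
            _ = |h j| * |Xᵀ.mulVec (X.mulVec h) j| := abs_mul _ _
            _ ≤ |h j| * (lamd + lam0) :=
                mul_le_mul_of_nonneg_left (hXtX j) (abs_nonneg _)
      _ = (lamd + lam0) * l1 h := by rw [l1, ← Finset.sum_mul]; ring
  -- ℓ¹ bound : l1 h ≤ 2 * (l1 (restr h S) + l1 (restr βstar Sᶜ))
  have sh := l1_split h S
  have sbs := l1_split βstar S
  have sbd := l1_split βd S
  have tri1 : l1 (restr h Sᶜ) ≤ l1 (restr βstar Sᶜ) + l1 (restr βd Sᶜ) :=
    l1_restr_sub_le βstar βd Sᶜ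
  have tri2 : l1 (restr βstar S) ≤ l1 (restr h S) + l1 (restr βd S) := by
    have e : βstar = h + βd := by rw [hh]; funext i; simp
    calc l1 (restr βstar S) = l1 (restr (h + βd) S) := by rw [← e]
      _ ≤ l1 (restr h S) + l1 (restr βd S) := l1_restr_add_le _ _ S
  have hL : l1 h ≤ 2 * (l1 (restr h S) + l1 (restr βstar Sᶜ)) := by linarith
  -- put it together
  rcases lt_or_eq_of_le (hlam0.trans hlam) with hpos | hzero
  · rw [one_div_mul_eq_div, div_le_iff₀ (by linarith : (0:ℝ) < 4 * lamd)]
    have hLnn : 0 ≤ l1 h := l1_nonneg h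
    nlinarith [mul_le_mul_of_nonneg_left hL (le_of_lt hpos)]
  · have hRnn : 0 ≤ l1 (restr h S) + l1 (restr βstar Sᶜ) :=
      add_nonneg (l1_nonneg _) (l1_nonneg _)
    rw [← hzero]
    simpa using hRnn
end
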